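/- Let {xₙ} be a strictly decreasing sequence of positive reals with x_{n+1}/xₙ → 0, and let W = {0} ∪ {xₙ : n ∈ ℕ}. Then W is a closed completely strongly porous set, and the sequence {(x_{n+1}, xₙ)}_{n∈ℕ} belongs to Ĩ_W. -/

import Mathlib

open Filter Set Topology ENNReal

/-- λ(E,0,h): the supremum of lengths of open subintervals of (0,h) disjoint from E. -/
noncomputable def lambda0 (E : Set ℝ) (h : ℝ) : ℝ :=
  sSup {l : ℝ | ∃ a b : ℝ, 0 ≤ a ∧ a ≤ b ∧ b ≤ h ∧ Set.Ioo a b ∩ E = ∅ ∧ l = b - a}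

/-- p⁺(E,0): the right porosity of E at 0. -/
noncomputable def porosity (E : Set ℝ) : ℝ :=
  Filter.limsup (fun h => lambda0 E h / h) (nhdsWithin 0 (Set.Ioi 0))

/-- 0 is an accumulation point of E (E ⊆ [0,∞), relative topology of [0,∞)). -/
def AccZero (E : Set ℝ) : Prop := ∀ ε > 0, ∃ x ∈ E, 0 < x ∧ x < ε

/-- (a,b) is a connected component of the exterior of E in [0,∞):
an open interval in [0,∞) disjoint from E, maximal with this property. -/
def IsCompExt (E : Set ℝ) (a b : ℝ) : Prop :=
  0 ≤ a ∧ a < b ∧ Set.Ioo a b ∩ E = ∅ ∧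
  ∀ c d : ℝ, 0 ≤ c → Set.Ioo a b ⊆ Set.Ioo c d → (c, d) ≠ (a, b) → Set.Ioo c d ∩ E ≠ ∅

/-- Membership in Ĩ_E. -/
def memIE (E : Set ℝ) (A : ℕ → ℝ × ℝ) : Prop :=
  (∀ n, 0 < (A n).1) ∧ (∀ n, IsCompExt E (A n).1 (A n).2) ∧
  Filter.Tendsto (fun n => (A n).1) Filter.atTop (nhds 0) ∧
  Filter.Tendsto (fun n => ((A n).2 - (A n).1) / (A n).2) Filter.atTop (nhds 1)

/-- Almost decreasing sequence: eventually nonincreasing. -/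
def AlmostDecr (τ : ℕ → ℝ) : Prop := ∀ᶠ n in Filter.atTop, τ (n + 1) ≤ τ n

/-- Membership in Ẽ₀^d: almost decreasing sequences in E∖{0} tending to 0. -/
def memE0d (E : Set ℝ) (τ : ℕ → ℝ) : Prop :=
  AlmostDecr τ ∧ Filter.Tendsto τ Filter.atTop (nhds 0) ∧ ∀ n, τ n ∈ E \ {0}

/-- Weak equivalence ≍ of sequences: c₁ aₙ ≤ γₙ ≤ c₂ aₙ for large n. -/
def SeqEquiv (a γ : ℕ → ℝ) : Prop :=
  ∃ c₁ c₂ : ℝ, 0 < c₁ ∧ 0 < c₂ ∧ ∀ᶠ n in Filter.atTop, c₁ * a n ≤ γ n ∧ γ n ≤ c₂ * a n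

/-- E is τ̃-strongly porous. -/
def StronglyPorousWrt (E : Set ℝ) (τ : ℕ → ℝ) : Prop :=
  ∃ A : ℕ → ℝ × ℝ, memIE E A ∧ SeqEquiv (fun n => (A n).1) τ

/-- E is completely strongly porous at 0. -/
def CSP (E : Set ℝ) : Prop := ∀ τ : ℕ → ℝ, memE0d E τ → StronglyPorousWrt E τ

/-- Membership in Ĩ_E^d: first coordinates almost decreasing. -/
def memIEd (E : Set ℝ) (A : ℕ → ℝ × ℝ) : Prop := memIE E A ∧ AlmostDecr (fun n => (A n).1)

/-- Membership in Ĩ_E^{sd}: first coordinates eventually strictly decreasing. -/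
def memIEsd (E : Set ℝ) (A : ℕ → ℝ × ℝ) : Prop :=
  memIE E A ∧ ∀ᶠ n in Filter.atTop, (A (n + 1)).1 < (A n).1

/-- The preorder Ã ⪯ L̃. -/
def Prec (A L : ℕ → ℝ × ℝ) : Prop :=
  ∃ N₁ : ℕ, ∃ f : ℕ → ℕ, ∀ n ≥ N₁, (A n).1 = (L (f n)).1

/-- L̃ is universal: every Ã ∈ Ĩ_E^d satisfies Ã ⪯ L̃. -/
def Universal (E : Set ℝ) (L : ℕ → ℝ × ℝ) : Prop :=
  ∀ A : ℕ → ℝ × ℝ, memIEd E A → Prec A L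

/-- M(L̃) = limsup lₙ/mₙ₊₁ (in [0,∞]). -/
noncomputable def Mq (L : ℕ → ℝ × ℝ) : ℝ≥0∞ :=
  Filter.limsup (fun n => ENNReal.ofReal ((L n).1 / (L (n + 1)).2)) Filter.atTop

/-- C(τ̃) = inf over {(aₙ,bₙ)} ∈ Ĩ_E with τₙ ≤ aₙ eventually of limsup aₙ/τₙ. -/
noncomputable def Cseq (E : Set ℝ) (τ : ℕ → ℝ) : ℝ≥0∞ :=
  ⨅ (A : ℕ → ℝ × ℝ) (_ : memIE E A ∧ ∀ᶠ n in Filter.atTop, τ n ≤ (A n).1),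
    Filter.limsup (fun n => ENNReal.ofReal ((A n).1 / τ n)) Filter.atTop

/-- C_E = sup over τ̃ ∈ Ẽ₀^d of C(τ̃). -/
noncomputable def CE (E : Set ℝ) : ℝ≥0∞ := ⨆ (τ : ℕ → ℝ) (_ : memE0d E τ), Cseq E τ

/-- E is uniformly strongly porous at 0. -/
def USP (E : Set ℝ) : Prop :=
  ∃ c : ℝ, 0 < c ∧ ∀ τ : ℕ → ℝ, memE0d E τ → ∃ A : ℕ → ℝ × ℝ, memIE E A ∧
    (∀ᶠ n in Filter.atTop, τ n ≤ (A n).1) ∧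
    Filter.limsup (fun n => ENNReal.ofReal ((A n).1 / τ n)) Filter.atTop ≤ ENNReal.ofReal c

lemma compExt_aux (x : ℕ → ℝ) (hpos : ∀ n, 0 < x n) (hdec : StrictAnti x) (n : ℕ) :
    IsCompExt ({0} ∪ Set.range x) (x (n + 1)) (x n) := by
  have hab : x (n + 1) < x n := hdec (Nat.lt_succ_self n)
  refine ⟨(hpos _).le, hab, ?_, ?_⟩
  · rw [Set.eq_empty_iff_forall_notMem]
    rintro y ⟨⟨hy1, hy2⟩, hy⟩
    rcases hy with hy | ⟨m, rfl⟩
    · rw [Set.mem_singleton_iff] at hy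
      subst hy; exact absurd hy1 (not_lt.2 (hpos _).le)
    · have h1 : m < n + 1 := hdec.lt_iff_gt.mp hy1
      have h2 : n < m := hdec.lt_iff_gt.mp hy2
      omega
  · intro c d hc hsub hne
    rw [Set.Ioo_subset_Ioo_iff hab] at hsub
    obtain ⟨hca, hbd⟩ := hsub
    rcases hca.lt_or_eq with h | h
    · apply Set.nonempty_iff_ne_empty.mp
      exact ⟨x (n + 1), ⟨h, lt_of_lt_of_le hab hbd⟩, Or.inr ⟨n + 1, rfl⟩⟩
    · rcases hbd.lt_or_eq with h' | h'
      · apply Set.nonempty_iff_ne_empty.mp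
        exact ⟨x n, ⟨lt_of_le_of_lt (h ▸ hca) hab, h'⟩, Or.inr ⟨n, rfl⟩⟩
      · exact absurd (Prod.ext h h'.symm) hne

lemma tendsto_zero_aux (x : ℕ → ℝ) (hpos : ∀ n, 0 < x n) (hdec : StrictAnti x)
    (hratio : Filter.Tendsto (fun n => x (n + 1) / x n) Filter.atTop (nhds 0)) :
    Filter.Tendsto x Filter.atTop (nhds 0) := by
  have hbdd : BddBelow (Set.range x) := ⟨0, by rintro y ⟨m, rfl⟩; exact (hpos m).le⟩
  have hL : Filter.Tendsto x Filter.atTop (nhds (⨅ n, x n)) :=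
    tendsto_atTop_ciInf hdec.antitone hbdd
  set L := ⨅ n, x n with hLdef
  have hL0 : L = 0 := by
    by_contra hne
    have h1 : Filter.Tendsto (fun n => x (n + 1)) Filter.atTop (nhds L) :=
      hL.comp (tendsto_add_atTop_nat 1)
    have h2 : Filter.Tendsto (fun n => x (n + 1) / x n) Filter.atTop (nhds (L / L)) :=
      h1.div hL hne
    rw [div_self hne] at h2
    exact one_ne_zero (tendsto_nhds_unique h2 hratio)
  rwa [hL0] at hL

theorem stmt18 (x : ℕ → ℝ) (hpos : ∀ n, 0 < x n) (hdec : StrictAnti x)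
    (hratio : Filter.Tendsto (fun n => x (n + 1) / x n) Filter.atTop (nhds 0))
    (W : Set ℝ) (hW : W = {0} ∪ Set.range x) :
    IsClosed W ∧ CSP W ∧ memIE W (fun n => (x (n + 1), x n)) := by
  have htend0 : Filter.Tendsto x Filter.atTop (nhds 0) := tendsto_zero_aux x hpos hdec hratio
  have hcomp : ∀ n, IsCompExt W (x (n + 1)) (x n) := by
    intro n; rw [hW]; exact compExt_aux x hpos hdec n
  -- the ratio fact in subtracted form
  have hsub1 : Filter.Tendsto (fun n => (x n - x (n + 1)) / x n) Filter.atTop (nhds 1) := by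
    have : Filter.Tendsto (fun n => 1 - x (n + 1) / x n) Filter.atTop (nhds (1 - 0)) :=
      tendsto_const_nhds.sub hratio
    rw [sub_zero] at this
    convert this using 2 with n
    rw [sub_div, div_self (hpos n).ne']
  refine ⟨?_, ?_, ?_⟩
  · -- IsClosed
    rw [hW]
    have : ({0} : Set ℝ) ∪ Set.range x = insert 0 (Set.range x) := by
      rw [Set.insert_eq]
    rw [this]
    exact htend0.isCompact_insert_range.isClosed
  · -- CSP
    intro τ hτ
    obtain ⟨hτdec, hτ0, hτmem⟩ := hτ
    have hτpos : ∀ n, 0 < τ n := by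
      intro n
      have := hτmem n
      rw [hW] at this
      rcases this.1 with h | ⟨m, hm⟩
      · exact absurd h this.2
      · rw [← hm]; exact hpos m
    -- choose index f n with x (f n) = τ n
    have hex : ∀ n, ∃ m, x m = τ n := by
      intro n
      have := hτmem n
      rw [hW] at this
      rcases this.1 with h | ⟨m, hm⟩
      · exact absurd h this.2
      · exact ⟨m, hm⟩
    set f : ℕ → ℕ := fun n => (hex n).choose with hf
    have hfx : ∀ n, x (f n) = τ n := fun n => (hex n).choose_spec
    set k : ℕ → ℕ := fun n => max (f n) 1 with hk
    have hk1 : ∀ n, 1 ≤ k n := fun n => le_max_right _ _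
    have hksucc : ∀ n, k n - 1 + 1 = k n := fun n => Nat.sub_add_cancel (hk1 n)
    set A : ℕ → ℝ × ℝ := fun n => (x (k n), x (k n - 1)) with hA
    -- eventually f n ≥ 1, hence k n = f n and a n = τ n
    have hev : ∀ᶠ n in Filter.atTop, (A n).1 = τ n := by
      have : ∀ᶠ n in Filter.atTop, τ n < x 0 := by
        have := hτ0.eventually (eventually_lt_nhds (hpos 0))
        exact this
      filter_upwards [this] with n hn
      have hfn : f n ≠ 0 := by
        intro h
        rw [← hfx n, h] at hn
        exact lt_irrefl _ hn
      have : k n = f n := max_eq_left (Nat.one_le_iff_ne_zero.mpr hfn)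
      simp only [hA, this, hfx]
    have hatend : Filter.Tendsto (fun n => (A n).1) Filter.atTop (nhds 0) :=
      hτ0.congr' (by filter_upwards [hev] with n hn using hn.symm)
    have hktop : Filter.Tendsto k Filter.atTop Filter.atTop := by
      rw [Filter.tendsto_atTop]
      intro N
      have : ∀ᶠ n in Filter.atTop, (A n).1 < x N :=
        hatend.eventually (eventually_lt_nhds (hpos N))
      filter_upwards [this] with n hn
      exact (hdec.lt_iff_gt.mp hn).le
    refine ⟨A, ⟨fun n => hpos _, ?_, hatend, ?_⟩, 1, 1, one_pos, one_pos, ?_⟩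
    · intro n
      have := hcomp (k n - 1)
      rwa [hksucc n] at this
    · -- tendsto (b-a)/b → 1
      have hmtop : Filter.Tendsto (fun n => k n - 1) Filter.atTop Filter.atTop :=
        Filter.tendsto_atTop.mpr fun N => by
          filter_upwards [hktop.eventually_ge_atTop (N + 1)] with n hn; omega
      have := hsub1.comp hmtop
      convert this using 2 with n
      simp only [hA, Function.comp_apply, hksucc n]
    · filter_upwards [hev] with n hn
      rw [hn]; constructor <;> simp
  · -- memIE for (x(n+1), x n)
    refine ⟨fun n => hpos _, fun n => hcomp n, htend0.comp (tendsto_add_atTop_nat 1), hsub1⟩
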